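/- Let G be an amply regular graph with parameters (n, d, α, β), β > α ≥ 1, let xy ∈ E, let H be the transport-bipartite graph of xy, and let M be a perfect matching of H. If v_0 ∈ N_x and w_0 ∈ N_y are reachable in M, then d(v_0, w_0) ≤ ρ_M(v_0, w_0) - k, where ρ_M(v_0,w_0) is the reachable-distance of v_0 and w_0 in M, k = |C ∩ {x_1,...,x_{β-α-1}}|, and C is the reachable-chain between v_0 and w_0 in M. -/

import Mathlib

variable {V : Type*}

/-- An amply regular graph with parameters `(n, d, a, b)`. -/
def IsAmplyRegular (G : SimpleGraph V) [Fintype V] [DecidableEq V] [DecidableRel G.Adj]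
    (n d a b : ℕ) : Prop :=
  Fintype.card V = n ∧ G.IsRegularOfDegree d ∧
  (∀ x y : V, G.Adj x y → (G.neighborFinset x ∩ G.neighborFinset y).card = a) ∧
  (∀ x y : V, G.dist x y = 2 → (G.neighborFinset x ∩ G.neighborFinset y).card = b)

/-- `N_x = Γ(x) \\ ({y} ∪ Γ(y))`: the neighbors of `x` other than `y` and not adjacent
to `y`. (`N_y` is `Nside G y x`.) -/
def Nside (G : SimpleGraph V) [Fintype V] [DecidableEq V] [DecidableRel G.Adj] (x y : V) :
    Finset V := G.neighborFinset x \ insert y (G.neighborFinset y)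

/-- `Δ_{xy} = Γ(x) ∩ Γ(y)`: the common neighbors of `x` and `y`. -/
def Delta (G : SimpleGraph V) [Fintype V] [DecidableEq V] [DecidableRel G.Adj] (x y : V) :
    Finset V := G.neighborFinset x ∩ G.neighborFinset y

/-- The `X`-side of the transport-bipartite graph of the edge `xy`:
`N_x ∪ Δ_{xy}` together with `m = β - α - 1` copies `x_1, …, x_m` of `x`. -/
abbrev TBX (G : SimpleGraph V) [Fintype V] [DecidableEq V] [DecidableRel G.Adj]
    (x y : V) (m : ℕ) :=
  {v : V // v ∈ Nside G x y ∪ Delta G x y} ⊕ Fin m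

/-- The `Y`-side of the transport-bipartite graph of the edge `xy`:
`N_y ∪ Δ'_{xy}` together with `m = β - α - 1` copies `x'_1, …, x'_m` of `x`,
where `Δ'_{xy}` is a primed copy of `Δ_{xy}`. -/
abbrev TBY (G : SimpleGraph V) [Fintype V] [DecidableEq V] [DecidableRel G.Adj]
    (x y : V) (m : ℕ) :=
  {v : V // v ∈ Nside G y x ∪ Delta G x y} ⊕ Fin m

/-- The edges of the transport-bipartite graph, from the `X`-side to the `Y`-side:
`E_1`-`E_3` and `E_5` are edges of `G` between `N_x ∪ Δ_{xy}` and `N_y ∪ Δ'_{xy}`;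
`E_4` joins `z_i` to its primed copy `z'_i`; `E_6`-`E_8` join the copies of `x` to
everything in `Δ'_{xy}`, `Δ_{xy}` and the other copies respectively. -/
def tbAux (G : SimpleGraph V) [Fintype V] [DecidableEq V] [DecidableRel G.Adj]
    (x y : V) (m : ℕ) (a : TBX G x y m) (b : TBY G x y m) : Prop :=
  match a, b with
  | Sum.inl v, Sum.inl w => G.Adj v.1 w.1 ∨ v.1 = w.1
  | Sum.inl v, Sum.inr _ => v.1 ∈ Delta G x y
  | Sum.inr _, Sum.inl w => w.1 ∈ Delta G x y
  | Sum.inr _, Sum.inr _ => True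

/-- The transport-bipartite graph `H` of the edge `xy` (Definition 3.1). -/
def TBGraph (G : SimpleGraph V) [Fintype V] [DecidableEq V] [DecidableRel G.Adj]
    (x y : V) (m : ℕ) : SimpleGraph (TBX G x y m ⊕ TBY G x y m) where
  Adj a b := match a, b with
    | Sum.inl a, Sum.inr b => tbAux G x y m a b
    | Sum.inr b, Sum.inl a => tbAux G x y m a b
    | _, _ => False
  symm := ⟨by rintro (a | a) (b | b) h <;> first | exact h | exact h.elim⟩
  loopless := ⟨by rintro (a | a) h <;> exact h⟩

noncomputable instance (G : SimpleGraph V) [Fintype V] [DecidableEq V] [DecidableRel G.Adj]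
    (x y : V) (m : ℕ) (a : TBX G x y m ⊕ TBY G x y m) :
    Fintype ((TBGraph G x y m).neighborSet a) := Fintype.ofFinite _

/-- `Primed t t'` says the `Y`-side vertex `t'` is the primed copy of the `X`-side
vertex `t` (so necessarily `t ∈ Δ_{xy} ∪ {x_1, …, x_m}`). -/
def Primed (G : SimpleGraph V) [Fintype V] [DecidableEq V] [DecidableRel G.Adj]
    (x y : V) (m : ℕ) : TBX G x y m → TBY G x y m → Prop
  | Sum.inl v, Sum.inl w => v.1 = w.1
  | Sum.inr i, Sum.inr j => i = j
  | _, _ => False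

/-- `ChainM M a L w`: the list `L = [t_1, …, t_j]` is a reachable-chain from `a` to `w`
in the matching `M`, i.e. `a t'_1, t_1 t'_2, …, t_j w ∈ M` (or `a w ∈ M` when `L = []`),
where `t'_i` denotes the primed copy of `t_i`. -/
inductive ChainM (G : SimpleGraph V) [Fintype V] [DecidableEq V] [DecidableRel G.Adj]
    (x y : V) (m : ℕ) (M : (TBGraph G x y m).Subgraph) :
    TBX G x y m → List (TBX G x y m) → TBY G x y m → Prop
  | nil {a w} : M.Adj (Sum.inl a) (Sum.inr w) → ChainM G x y m M a [] w
  | cons {a t t' L w} : M.Adj (Sum.inl a) (Sum.inr t') → Primed G x y m t t' →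
      ChainM G x y m M t L w → ChainM G x y m M a (t :: L) w

/-- The `X`-side vertices which are copies `x_i` of `x`. -/
def isCopy (G : SimpleGraph V) [Fintype V] [DecidableEq V] [DecidableRel G.Adj]
    (x y : V) (m : ℕ) : TBX G x y m → Bool
  | Sum.inl _ => false
  | Sum.inr _ => true


section Aux
variable [Fintype V] [DecidableEq V] {G : SimpleGraph V} [DecidableRel G.Adj]
    {x y : V} {m : ℕ} {M : (TBGraph G x y m).Subgraph}

lemma chain_last_real {w₀ : V} {hw : w₀ ∈ Nside G y x ∪ Delta G x y}
    (hw' : w₀ ∉ Delta G x y) :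
    ∀ {a : TBX G x y m} (L : List (TBX G x y m))
      (_ : ChainM G x y m M a L (Sum.inl ⟨w₀, hw⟩)) (hL : L ≠ []),
      isCopy G x y m (L.getLast hL) = false := by
  intro a L
  induction L generalizing a with
  | nil => intro _ hL; exact absurd rfl hL
  | cons t L ih =>
    intro hc hL
    cases hc with
    | cons h1 hp hc' =>
      cases L with
      | nil =>
        cases hc' with
        | nil h2 =>
          cases t with
          | inl v => rfl
          | inr i => exact absurd (M.adj_sub h2) hw'
      | cons s L =>
        rw [List.getLast_cons (by simp)]
        exact ih hc' (by simp)

lemma chain_first_real {v₀ : V} {hv : v₀ ∈ Nside G x y ∪ Delta G x y}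
    (hv' : v₀ ∉ Delta G x y) {t : TBX G x y m} {L : List (TBX G x y m)}
    {w : TBY G x y m}
    (hc : ChainM G x y m M (Sum.inl ⟨v₀, hv⟩) (t :: L) w) :
    isCopy G x y m t = false := by
  cases hc with
  | @cons _ _ t' _ _ h1 hp hc' =>
    cases t with
    | inl v => rfl
    | inr i =>
      cases t' with
      | inl w' => exact hp.elim
      | inr j => exact absurd (M.adj_sub h1) hv'

end Aux
/-- If `v_0 ∈ N_x` and `w_0 ∈ N_y` are joined by a reachable-chain
`C = (v_0, t_1, …, t_j, w_0)` in a perfect matching `M`, then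
`d(v_0, w_0) ≤ ρ_M(v_0, w_0) - k` where `ρ_M(v_0, w_0) = j + 1` is the reachable-distance
and `k = |C ∩ {x_1, …, x_{β-α-1}}|`. -/
theorem stmt7 [Fintype V] [DecidableEq V] (G : SimpleGraph V) [DecidableRel G.Adj]
    (n d α β : ℕ) (h : IsAmplyRegular G n d α β) (hβα : α < β) (hα : 1 ≤ α)
    (x y : V) (hxy : G.Adj x y)
    (M : (TBGraph G x y (β - α - 1)).Subgraph) (hM : M.IsPerfectMatching)
    (v₀ w₀ : V) (hv₀ : v₀ ∈ Nside G x y) (hw₀ : w₀ ∈ Nside G y x)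
    (L : List (TBX G x y (β - α - 1)))
    (hc : ChainM G x y (β - α - 1) M (Sum.inl ⟨v₀, Finset.mem_union_left _ hv₀⟩) L
      (Sum.inl ⟨w₀, Finset.mem_union_left _ hw₀⟩)) :
    G.dist v₀ w₀ ≤ (L.length + 1) - L.countP (isCopy G x y (β - α - 1)) := by
  classical
  have hvx : G.Adj x v₀ := by
    have := hv₀; simp [Nside, SimpleGraph.mem_neighborFinset] at this; exact this.1
  have hwy : G.Adj y w₀ := by
    have := hw₀; simp [Nside, SimpleGraph.mem_neighborFinset] at this; exact this.1
  have hvD : v₀ ∉ Delta G x y := by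
    have := hv₀; simp [Nside, Delta, SimpleGraph.mem_neighborFinset] at this ⊢
    intro _; exact this.2.2
  have hwD : w₀ ∉ Delta G x y := by
    have := hw₀; simp [Nside, Delta, SimpleGraph.mem_neighborFinset] at this ⊢
    intro h'; exact absurd h' this.2.2
  have hd3 : G.dist v₀ w₀ ≤ 3 := by
    simpa using SimpleGraph.dist_le
      (SimpleGraph.Walk.cons hvx.symm (SimpleGraph.Walk.cons hxy
        (SimpleGraph.Walk.cons hwy SimpleGraph.Walk.nil)))
  cases L with
  | nil =>
    cases hc with
    | nil h1 =>
      have h2 : G.Adj v₀ w₀ ∨ v₀ = w₀ := M.adj_sub h1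
      rcases h2 with h2 | h2
      · simpa using SimpleGraph.dist_le (SimpleGraph.Walk.cons h2 SimpleGraph.Walk.nil)
      · simp [h2, SimpleGraph.dist_self]
  | cons t₁ L1 =>
  cases L1 with
  | nil =>
    have ht : isCopy G x y (β - α - 1) t₁ = false := chain_first_real hvD hc
    obtain ⟨u, hu⟩ : ∃ u, t₁ = Sum.inl u := by
      cases t₁ with
      | inl u => exact ⟨u, rfl⟩
      | inr i => simp [isCopy] at ht
    subst hu
    cases hc with
    | @cons _ _ t' _ _ h1 hp hc' =>
      cases t' with
      | inr j => exact hp.elim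
      | inl u' =>
        have hpe : u.1 = u'.1 := hp
        have h3 : G.Adj v₀ u'.1 ∨ v₀ = u'.1 := M.adj_sub h1
        cases hc' with
        | nil h4 =>
          have h5 : G.Adj u.1 w₀ ∨ u.1 = w₀ := M.adj_sub h4
          rw [hpe] at h5
          have hb : (([Sum.inl u] : List (TBX G x y (β - α - 1))).length + 1)
              - List.countP (isCopy G x y (β - α - 1)) [Sum.inl u] = 2 := by
            simp [isCopy]
          rw [hb]
          rcases h3 with h3 | h3 <;> rcases h5 with h5 | h5
          · exact le_trans (SimpleGraph.dist_le
              (SimpleGraph.Walk.cons h3 (SimpleGraph.Walk.cons h5 SimpleGraph.Walk.nil)))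
              (by simp)
          · rw [← h5]
            exact le_trans (SimpleGraph.dist_le
              (SimpleGraph.Walk.cons h3 SimpleGraph.Walk.nil)) (by simp)
          · rw [h3]
            exact le_trans (SimpleGraph.dist_le
              (SimpleGraph.Walk.cons h5 SimpleGraph.Walk.nil)) (by simp)
          · rw [h3, h5]; simp [SimpleGraph.dist_self]
  | cons t₂ L' =>
    have ht1 : isCopy G x y (β - α - 1) t₁ = false := chain_first_real hvD hc
    have hne2 : t₁ :: t₂ :: L' ≠ [] := by simp
    have hlast : isCopy G x y (β - α - 1) ((t₁ :: t₂ :: L').getLast hne2) = false :=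
      chain_last_real hwD _ hc hne2
    have hne : t₂ :: L' ≠ [] := by simp
    have hlast' : isCopy G x y (β - α - 1) ((t₂ :: L').getLast hne) = false := by
      rwa [List.getLast_cons hne] at hlast
    have hcount : (t₂ :: L').countP (isCopy G x y (β - α - 1)) ≤ (t₂ :: L').length - 1 := by
      have hdl : t₂ :: L' = (t₂ :: L').dropLast ++ [(t₂ :: L').getLast hne] :=
        (List.dropLast_append_getLast hne).symm
      calc (t₂ :: L').countP (isCopy G x y (β - α - 1))
          = ((t₂ :: L').dropLast ++ [(t₂ :: L').getLast hne]).countP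
              (isCopy G x y (β - α - 1)) := by rw [← hdl]
        _ = (t₂ :: L').dropLast.countP (isCopy G x y (β - α - 1)) := by
            simp [List.countP_append, hlast']
        _ ≤ (t₂ :: L').dropLast.length := List.countP_le_length
        _ = (t₂ :: L').length - 1 := by simp
    have hcL : (t₁ :: t₂ :: L').countP (isCopy G x y (β - α - 1))
        ≤ (t₁ :: t₂ :: L').length - 2 := by
      rw [List.countP_cons, ht1]
      simpa using hcount
    refine le_trans hd3 ?_
    have h1 : (t₁ :: t₂ :: L').length = L'.length + 2 := by simp
    omega
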